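/- S_n(x²;a,b,c) is symmetric in its parameters: for all nonnegative integers n and all x, the polynomial S_n(x²;a,b,c) defined by (a+b)_n (a+c)_n · ₃F₂(-n, a+ix, a-ix; a+b, a+c; 1) is invariant under any permutation of (a,b,c); in particular S_n(x²;a,b,c) = S_n(x²;b,a,c). -/

import Mathlib

open Finset Complex

/-- Pochhammer symbol `(a)_k = a(a+1)⋯(a+k-1)`. -/
noncomputable def poch (a : ℂ) (k : ℕ) : ℂ := ∏ j ∈ Finset.range k, (a + j)

lemma poch_zero (a : ℂ) : poch a 0 = 1 := by simp [poch]

lemma poch_succ (a : ℂ) (k : ℕ) : poch a (k + 1) = poch a k * (a + k) := by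
  simp [poch, Finset.prod_range_succ]

lemma poch_add (a : ℂ) (k j : ℕ) : poch a (k + j) = poch a k * poch (a + k) j := by
  induction j with
  | zero => simp [poch_zero]
  | succ j ih => rw [← add_assoc, poch_succ, ih, poch_succ]; push_cast; ring

lemma poch_neg_nat (n k : ℕ) (hk : k ≤ n) :
    poch (-(n : ℂ)) k = (-1) ^ k * (k.factorial : ℂ) * (n.choose k : ℂ) := by
  induction k with
  | zero => simp [poch_zero]
  | succ k ih =>
    have hk' : k ≤ n := Nat.le_of_succ_le hk
    rw [poch_succ, ih hk']
    have h : (n.choose (k+1) : ℂ) * (k+1) = (n.choose k : ℂ) * ((n : ℂ) - k) := by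
      have := Nat.choose_succ_right_eq n k
      have hsub : ((n - k : ℕ) : ℂ) = (n : ℂ) - k := by
        push_cast [Nat.cast_sub hk']; ring
      calc (n.choose (k+1) : ℂ) * (k+1) = ((n.choose (k+1) * (k+1) : ℕ) : ℂ) := by push_cast; ring
        _ = ((n.choose k * (n - k) : ℕ) : ℂ) := by rw [this]
        _ = (n.choose k : ℂ) * ((n:ℂ) - k) := by push_cast [hsub]; ring
    have hfac : ((k+1).factorial : ℂ) = (k.factorial : ℂ) * (k+1) := by
      push_cast [Nat.factorial_succ]; ring
    rw [hfac]
    have : (-(n:ℂ) + k) = -((n:ℂ) - k) := by ring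
    rw [this]
    rw [pow_succ]
    linear_combination ((-1:ℂ)^k * (k.factorial : ℂ)) * h

lemma poch_one (a : ℂ) : poch a 1 = a := by simp [poch]

lemma poch_one_add (a : ℂ) (j : ℕ) : poch a (j + 1) = a * poch (a + 1) j := by
  have := poch_add a 1 j
  rw [add_comm 1 j] at this
  simpa [poch_one] using this

/-- Chu–Vandermonde in product form:
`∑ k, (-1)^k C(m,k) (B)_k (C+k)_{m-k} = (C-B)_m`. -/
lemma chu_vandermonde (m : ℕ) (B C : ℂ) :
    ∑ k ∈ Finset.range (m + 1),
      (-1) ^ k * (m.choose k : ℂ) * poch B k * poch (C + k) (m - k) = poch (C - B) m := by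
  induction m generalizing C with
  | zero => simp [poch_zero]
  | succ m ih =>
    have pascal : ∀ k ∈ Finset.range (m + 2),
        (-1:ℂ) ^ k * ((m+1).choose k : ℂ) * poch B k * poch (C + k) (m + 1 - k)
        = (-1:ℂ) ^ k * (m.choose k : ℂ) * poch B k * poch (C + k) (m + 1 - k)
          + ((-1:ℂ) ^ k * ((if k = 0 then 0 else (m.choose (k-1) : ℂ))) * poch B k
              * poch (C + k) (m + 1 - k)) := by
      intro k _
      rcases k with _ | k
      · simp
      · rw [Nat.choose_succ_succ' m k, if_neg (Nat.succ_ne_zero k)]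
        have hs : k + 1 - 1 = k := rfl
        rw [hs]
        push_cast
        ring
    rw [Finset.sum_congr rfl pascal, Finset.sum_add_distrib]
    have hA1 : ∑ k ∈ Finset.range (m + 2),
        (-1:ℂ) ^ k * (m.choose k : ℂ) * poch B k * poch (C + k) (m + 1 - k)
        = ∑ k ∈ Finset.range (m + 1),
            (-1:ℂ) ^ k * (m.choose k : ℂ) * poch B k * ((C + k) * poch (C + 1 + k) (m - k)) := by
      rw [Finset.sum_range_succ, Nat.choose_succ_self]
      simp only [Nat.cast_zero, mul_zero, zero_mul, mul_zero, add_zero]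
      refine Finset.sum_congr rfl fun k hk => ?_
      have hk' : k ≤ m := Nat.lt_succ_iff.mp (Finset.mem_range.mp hk)
      have h1 : m + 1 - k = (m - k) + 1 := by omega
      rw [h1, poch_one_add]
      ring_nf
    have hA2 : ∑ k ∈ Finset.range (m + 2),
        (-1:ℂ) ^ k * ((if k = 0 then 0 else (m.choose (k-1) : ℂ))) * poch B k
          * poch (C + k) (m + 1 - k)
        = ∑ k ∈ Finset.range (m + 1),
            -((-1:ℂ) ^ k * (m.choose k : ℂ) * (poch B k * (B + k)) * poch (C + 1 + k) (m - k)) := by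
      rw [Finset.sum_range_succ' _ (m+1)]
      norm_num
      rw [← Finset.sum_neg_distrib]
      refine Finset.sum_congr rfl fun k hk => ?_
      have h1 : m + 1 - (k + 1) = m - k := by omega
      rw [h1, poch_succ, pow_succ]
      have h2 : C + (↑k + 1) = C + 1 + ↑k := by ring
      rw [h2]
      ring
    rw [hA1, hA2, ← Finset.sum_add_distrib]
    have : ∀ k ∈ Finset.range (m+1),
        (-1:ℂ) ^ k * (m.choose k : ℂ) * poch B k * ((C + k) * poch (C + 1 + k) (m - k))
          + -((-1:ℂ) ^ k * (m.choose k : ℂ) * (poch B k * (B + k)) * poch (C + 1 + k) (m - k))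
        = (C - B) * ((-1:ℂ) ^ k * (m.choose k : ℂ) * poch B k * poch (C + 1 + k) (m - k)) := by
      intro k _; ring
    rw [Finset.sum_congr rfl this, ← Finset.mul_sum, ih (C + 1)]
    have h3 : C + 1 - B = C - B + 1 := by ring
    rw [h3, ← poch_one_add]

/-- Vandermonde for rising factorials: `(X+Y)_m = ∑ j C(m,j) (X)_j (Y)_{m-j}`. -/
lemma vandermonde (m : ℕ) (X Y : ℂ) :
    poch (X + Y) m
      = ∑ j ∈ Finset.range (m + 1), (m.choose j : ℂ) * poch X j * poch Y (m - j) := by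
  induction m with
  | zero => simp [poch_zero]
  | succ m ih =>
    have pascal : ∀ j ∈ Finset.range (m + 2),
        ((m+1).choose j : ℂ) * poch X j * poch Y (m + 1 - j)
        = (m.choose j : ℂ) * poch X j * poch Y (m + 1 - j)
          + (if j = 0 then 0 else (m.choose (j-1) : ℂ)) * poch X j * poch Y (m + 1 - j) := by
      intro j _
      rcases j with _ | j
      · simp
      · rw [Nat.choose_succ_succ' m j, if_neg (Nat.succ_ne_zero j)]
        have hs : j + 1 - 1 = j := rfl
        rw [hs]
        push_cast
        ring
    rw [Finset.sum_congr rfl pascal, Finset.sum_add_distrib]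
    have hA1 : ∑ j ∈ Finset.range (m + 2),
        (m.choose j : ℂ) * poch X j * poch Y (m + 1 - j)
        = ∑ j ∈ Finset.range (m + 1),
            (m.choose j : ℂ) * poch X j * (poch Y (m - j) * (Y + ((m : ℂ) - j))) := by
      rw [Finset.sum_range_succ, Nat.choose_succ_self]
      simp only [Nat.cast_zero, zero_mul, add_zero]
      refine Finset.sum_congr rfl fun j hj => ?_
      have hj' : j ≤ m := Nat.lt_succ_iff.mp (Finset.mem_range.mp hj)
      have h1 : m + 1 - j = (m - j) + 1 := by omega
      rw [h1, poch_succ, Nat.cast_sub hj']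
    have hA2 : ∑ j ∈ Finset.range (m + 2),
        (if j = 0 then 0 else (m.choose (j-1) : ℂ)) * poch X j * poch Y (m + 1 - j)
        = ∑ j ∈ Finset.range (m + 1),
            (m.choose j : ℂ) * (poch X j * (X + j)) * poch Y (m - j) := by
      rw [Finset.sum_range_succ' _ (m+1)]
      norm_num
      refine Finset.sum_congr rfl fun j hj => ?_
      have h1 : m + 1 - (j + 1) = m - j := by omega
      rw [h1, poch_succ]
    rw [hA1, hA2, ← Finset.sum_add_distrib, poch_succ, ih, Finset.sum_mul]
    refine Finset.sum_congr rfl fun j hj => ?_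
    ring

lemma triangle (n : ℕ) (f : ℕ → ℕ → ℂ) :
    ∑ k ∈ Finset.range (n + 1), ∑ j ∈ Finset.range (n + 1 - k), f k j
      = ∑ m ∈ Finset.range (n + 1), ∑ k ∈ Finset.range (m + 1), f k (m - k) := by
  rw [Finset.sum_sigma', Finset.sum_sigma']
  refine Finset.sum_nbij' (fun p => ⟨p.1 + p.2, p.1⟩) (fun p => ⟨p.2, p.1 - p.2⟩)
    ?_ ?_ ?_ ?_ ?_ <;>
    rintro ⟨p1, p2⟩ hp <;>
    simp only [Finset.mem_sigma, Finset.mem_range] at hp ⊢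
  · omega
  · omega
  · simp
  · simp only [Sigma.mk.inj_iff]
    constructor
    · omega
    · exact heq_of_eq (by rfl)
  · congr 1
    omega

/-- Key identity: the product form of `S_n` equals a manifestly `a ↔ b` symmetric sum. -/
lemma key_identity (n : ℕ) (y a b c : ℂ) :
    ∑ k ∈ Finset.range (n + 1), (-1) ^ k * (n.choose k : ℂ) * poch (a + y) k * poch (a - y) k
        * poch (a + b + k) (n - k) * poch (a + c + k) (n - k)
      = ∑ m ∈ Finset.range (n + 1), (n.choose m : ℂ) * poch (a - y) m * poch (b - y) m
          * poch (c + y) (n - m) * poch (a + b + m) (n - m) := by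
  -- expand (a+c+k)_{n-k} by Vandermonde with X = a-y+k, Y = c+y
  have step1 : ∀ k ∈ Finset.range (n + 1),
      (-1:ℂ) ^ k * (n.choose k : ℂ) * poch (a + y) k * poch (a - y) k
        * poch (a + b + k) (n - k) * poch (a + c + k) (n - k)
      = ∑ j ∈ Finset.range (n + 1 - k),
          (-1:ℂ) ^ k * (n.choose k : ℂ) * ((n-k).choose j : ℂ) * poch (a + y) k
            * poch (a - y) (k + j) * poch (c + y) (n - k - j) * poch (a + b + k) (n - k) := by
    intro k hk
    have hk' : k ≤ n := Nat.lt_succ_iff.mp (Finset.mem_range.mp hk)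
    have hXY : a + c + (k : ℂ) = (a - y + k) + (c + y) := by ring
    have hrange : n + 1 - k = (n - k) + 1 := by omega
    rw [hXY, vandermonde (n - k) (a - y + k) (c + y), Finset.mul_sum, hrange]
    refine Finset.sum_congr rfl fun j hj => ?_
    have hj' : j ≤ n - k := Nat.lt_succ_iff.mp (Finset.mem_range.mp hj)
    rw [poch_add (a - y) k j]
    have : n - k - j = n - k - j := rfl
    ring
  rw [Finset.sum_congr rfl step1, triangle n]
  refine Finset.sum_congr rfl fun m hm => ?_
  have hm' : m ≤ n := Nat.lt_succ_iff.mp (Finset.mem_range.mp hm)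
  -- now the inner sum over k
  have step2 : ∀ k ∈ Finset.range (m + 1),
      (-1:ℂ) ^ k * (n.choose k : ℂ) * ((n-k).choose (m-k) : ℂ) * poch (a + y) k
        * poch (a - y) (k + (m - k)) * poch (c + y) (n - k - (m - k)) * poch (a + b + k) (n - k)
      = ((n.choose m : ℂ) * poch (a - y) m * poch (c + y) (n - m) * poch (a + b + m) (n - m))
          * ((-1:ℂ) ^ k * (m.choose k : ℂ) * poch (a + y) k * poch ((a + b) + k) (m - k)) := by
    intro k hk
    have hk' : k ≤ m := Nat.lt_succ_iff.mp (Finset.mem_range.mp hk)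
    have h1 : k + (m - k) = m := by omega
    have h2 : n - k - (m - k) = n - m := by omega
    have h3 : n - k = (m - k) + (n - m) := by omega
    have hchoose : (n.choose k : ℂ) * ((n-k).choose (m-k) : ℂ)
        = (n.choose m : ℂ) * (m.choose k : ℂ) := by
      have := Nat.choose_mul (n := n) hk'
      calc (n.choose k : ℂ) * ((n-k).choose (m-k) : ℂ)
          = ((n.choose k * (n-k).choose (m-k) : ℕ) : ℂ) := by push_cast; ring
        _ = ((n.choose m * m.choose k : ℕ) : ℂ) := by rw [← this]
        _ = (n.choose m : ℂ) * (m.choose k : ℂ) := by push_cast; ring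
    have hpoch : poch (a + b + k) (n - k)
        = poch (a + b + k) (m - k) * poch (a + b + m) (n - m) := by
      rw [h3, poch_add]
      congr 2
      have : ((m - k : ℕ) : ℂ) = (m : ℂ) - k := by
        push_cast [Nat.cast_sub hk']; ring
      rw [this]; ring
    rw [h1, h2, hpoch]
    linear_combination ((-1:ℂ)^k * (poch (a + y) k * poch (a - y) m * poch (c + y) (n - m)
      * poch (a + b + (k:ℂ)) (m - k) * poch (a + b + (m:ℂ)) (n - m))) * hchoose
  rw [Finset.sum_congr rfl step2, ← Finset.mul_sum, chu_vandermonde m (a + y) (a + b)]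
  have : a + b - (a + y) = b - y := by ring
  rw [this]
  ring

lemma poch_real_ne_zero (r : ℝ) (h : ∀ m : ℕ, r ≠ -(m : ℝ)) (k : ℕ) :
    poch (r : ℂ) k ≠ 0 := by
  unfold poch
  rw [Finset.prod_ne_zero_iff]
  intro j _
  have hj : ((r : ℂ) + j) = ((r + j : ℝ) : ℂ) := by push_cast; ring
  rw [hj, Ne, Complex.ofReal_eq_zero]
  intro hz
  exact h j (by linarith)

/-- Terminating hypergeometric series `₃F₂(-n, A, B; C, D; z)`. -/
noncomputable def F32 (n : ℕ) (A B C D z : ℂ) : ℂ :=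
  ∑ k ∈ Finset.range (n + 1),
    poch (-(n : ℂ)) k * poch A k * poch B k / (poch C k * poch D k * (k.factorial : ℂ)) * z ^ k

/-- Continuous dual Hahn polynomial
`S_n(x²;a,b,c) = (a+b)_n (a+c)_n ₃F₂(-n, a+ix, a-ix; a+b, a+c; 1)`. -/
noncomputable def cdHahn (n : ℕ) (x a b c : ℝ) : ℂ :=
  poch ((a : ℂ) + b) n * poch ((a : ℂ) + c) n *
    F32 n ((a : ℂ) + Complex.I * x) ((a : ℂ) - Complex.I * x) ((a : ℂ) + b) ((a : ℂ) + c) 1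

/-- Product form of the continuous dual Hahn polynomial (denominator-free). -/
lemma cdHahn_eq_prod (n : ℕ) (x a b c : ℝ)
    (hab : ∀ m : ℕ, a + b ≠ -(m : ℝ)) (hac : ∀ m : ℕ, a + c ≠ -(m : ℝ)) :
    cdHahn n x a b c
      = ∑ k ∈ Finset.range (n + 1),
          (-1) ^ k * (n.choose k : ℂ) * poch ((a : ℂ) + Complex.I * x) k
            * poch ((a : ℂ) - Complex.I * x) k
            * poch ((a : ℂ) + b + k) (n - k) * poch ((a : ℂ) + c + k) (n - k) := by
  unfold cdHahn F32
  rw [Finset.mul_sum]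
  refine Finset.sum_congr rfl fun k hk => ?_
  have hk' : k ≤ n := Nat.lt_succ_iff.mp (Finset.mem_range.mp hk)
  have hsplit : n = k + (n - k) := by omega
  have hab0 : poch ((a : ℂ) + b) k ≠ 0 := by
    have : ((a : ℂ) + b) = ((a + b : ℝ) : ℂ) := by push_cast; ring
    rw [this]; exact poch_real_ne_zero _ hab k
  have hac0 : poch ((a : ℂ) + c) k ≠ 0 := by
    have : ((a : ℂ) + c) = ((a + c : ℝ) : ℂ) := by push_cast; ring
    rw [this]; exact poch_real_ne_zero _ hac k
  have hfac0 : ((k.factorial : ℂ)) ≠ 0 := by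
    exact_mod_cast Nat.cast_ne_zero.mpr k.factorial_ne_zero
  have e1 : poch ((a : ℂ) + b) n = poch ((a : ℂ) + b) k * poch ((a : ℂ) + b + k) (n - k) := by
    conv_lhs => rw [hsplit]
    exact poch_add _ _ _
  have e2 : poch ((a : ℂ) + c) n = poch ((a : ℂ) + c) k * poch ((a : ℂ) + c + k) (n - k) := by
    conv_lhs => rw [hsplit]
    exact poch_add _ _ _
  rw [e1, e2, poch_neg_nat n k hk', one_pow]
  field_simp

/-- The continuous dual Hahn polynomial `S_n(x²;a,b,c)` is symmetric in the
parameters `(a,b,c)`: both transpositions (which generate all permutations)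
leave it invariant; in particular `S_n(x²;a,b,c) = S_n(x²;b,a,c)`. -/
theorem cdHahn_symmetric (n : ℕ) (x a b c : ℝ)
    (hab : ∀ m : ℕ, a + b ≠ -(m : ℝ)) (hac : ∀ m : ℕ, a + c ≠ -(m : ℝ))
    (hbc : ∀ m : ℕ, b + c ≠ -(m : ℝ)) :
    cdHahn n x a b c = cdHahn n x b a c ∧ cdHahn n x a b c = cdHahn n x a c b := by
  constructor
  · have hba : ∀ m : ℕ, b + a ≠ -(m : ℝ) := fun m => by rw [add_comm]; exact hab m
    rw [cdHahn_eq_prod n x a b c hab hac, cdHahn_eq_prod n x b a c hba hbc,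
      key_identity n (Complex.I * x) (a : ℂ) (b : ℂ) (c : ℂ),
      key_identity n (Complex.I * x) (b : ℂ) (a : ℂ) (c : ℂ)]
    refine Finset.sum_congr rfl fun m hm => ?_
    have h1 : (b : ℂ) + a + m = (a : ℂ) + b + m := by ring
    rw [h1]
    ring
  · unfold cdHahn F32
    rw [mul_comm (poch ((a:ℂ) + b) n) (poch ((a:ℂ) + c) n)]
    congr 1
    refine Finset.sum_congr rfl fun k hk => ?_
    ring
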